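/- For every θ ∈ ℝ, the subspace of ℝ⁶ (coordinates ordered as (ẋ, ẏ, θ̇, α̇, φ̇₁, φ̇₂)) spanned by Y₁ = (cos θ, sin θ, 0, 0, 1/r, 1/r), Y₂ = (0,0,0,1,0,0), Y₃ = (0, 0, 1, 0, −d/(2r), d/(2r)) intersects the subspace spanned by the coordinate vectors e₁, e₂, e₃ (the ẋ, ẏ, θ̇ directions) only in the zero vector. Hence the WIP with SE(2) symmetry is in the principal kinematic case: 𝒟_q ∩ T_q Orb(q) = {0}. -/

import Mathlib

open Real

/-- Principal kinematic case for the WIP with SE(2) symmetry: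
the constraint distribution 𝒟_q = span{Y₁, Y₂, Y₃} intersects the tangent space
to the SE(2) orbit span{e₁, e₂, e₃} only in the zero vector. -/
theorem wip_principal_kinematic_case (r d θ : ℝ) (hr : 0 < r) (hd : 0 < d) :
    Submodule.span ℝ
        ({![cos θ, sin θ, 0, 0, 1 / r, 1 / r],
          ![0, 0, 0, 1, 0, 0],
          ![0, 0, 1, 0, -d / (2 * r), d / (2 * r)]} : Set (Fin 6 → ℝ))
      ⊓ Submodule.span ℝ
        ({![1, 0, 0, 0, 0, 0],
          ![0, 1, 0, 0, 0, 0],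
          ![0, 0, 1, 0, 0, 0]} : Set (Fin 6 → ℝ))
      = ⊥ := by
  rw [eq_bot_iff]
  intro x hx
  rw [Submodule.mem_inf] at hx
  obtain ⟨hx1, hx2⟩ := hx
  simp only [Submodule.mem_span_insert, Submodule.mem_span_singleton] at hx1 hx2
  obtain ⟨a, y, ⟨b, z, ⟨c, rfl⟩, rfl⟩, rfl⟩ := hx1
  obtain ⟨p, y', ⟨q, z', ⟨s, rfl⟩, rfl⟩, hx⟩ := hx2
  have h3 := congrFun hx 3
  have h4 := congrFun hx 4
  have h5 := congrFun hx (Fin.succ 4)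
  simp [Matrix.cons_val_succ] at h3 h4 h5
  have hr' : r ≠ 0 := ne_of_gt hr
  have hd' : d ≠ 0 := ne_of_gt hd
  field_simp at h4 h5
  have ha : a = 0 := by
    have h6 : a * (2 * r) = 0 := by rw [show a = 0 by linarith]; ring
    rcases mul_eq_zero.mp h6 with h | h
    · exact h
    · linarith
  have hc : c = 0 := by
    have h6 : c * (d * r) = 0 := by nlinarith
    rcases mul_eq_zero.mp h6 with h | h
    · exact h
    · nlinarith [mul_pos hd hr]
  subst ha hc h3
  simp
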